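/- Let f : 𝔽₂^r → 𝔽₂^r be a Boolean monomial fixed point system with dependency graph 𝒳, let g : 𝔽₂^s → 𝔽₂^s be a Boolean monomial system whose dependency graph 𝒴 is strongly connected with loop number ≥ 1, and let f # g be a glueing with dependency graph 𝒳 # 𝒴. Then f # g is a fixed point system if and only if at least one of the following holds: (1) some vertex of 𝒴 is connected in 𝒳 # 𝒴 by a walk to a zero of 𝒳; (2) g is a fixed point system. -/

import Mathlib

/-- `hasWalk E m a b` means there is a walk of length `m` from `a` to `b`
in the directed graph with edge relation `E` (walks of length 0 allowed). -/
def hasWalk {V : Type*} (E : V → V → Prop) : ℕ → V → V → Prop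
  | 0 => fun a b => a = b
  | m + 1 => fun a b => ∃ c, E a c ∧ hasWalk E m c b

/-- A directed graph is strongly connected if there is a walk between any
two vertices. -/
def StronglyConnected {V : Type*} (E : V → V → Prop) : Prop :=
  ∀ a b : V, ∃ m, hasWalk E m a b

/-- The loop number at a vertex `a`: the minimum `t ≥ 1` arising as the
difference of lengths of two closed walks at `a`, and `0` if there is no
closed walk of length `≥ 1` at `a` (so no such difference exists). -/
noncomputable def loopNumAt {V : Type*} (E : V → V → Prop) (a : V) : ℕ :=
  sInf {t | 1 ≤ t ∧ ∃ p q, hasWalk E p a a ∧ hasWalk E q a a ∧ p = q + t}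

/-- Evaluation of a monomial coordinate function: `none` is the constant 0,
`some S` is the square-free monomial `∏ j ∈ S, x j` (empty product = 1). -/
def monEval {ι : Type*} (c : Option (Finset ι)) (x : ι → ZMod 2) : ZMod 2 :=
  match c with
  | none => 0
  | some S => ∏ j ∈ S, x j

/-- The Boolean monomial system determined by the coordinate data `M`. -/
def sysEval {ι : Type*} (M : ι → Option (Finset ι)) (x : ι → ZMod 2) : ι → ZMod 2 :=
  fun i => monEval (M i) x

/-- Edge relation of the dependency graph of a Boolean monomial system:
`i → j` iff `f i ≠ 0` and `x j` is a factor of `f i`. -/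
def depEdge {ι : Type*} (M : ι → Option (Finset ι)) (i j : ι) : Prop :=
  ∃ S, M i = some S ∧ j ∈ S

/-- A map is a fixed point system if every trajectory reaches a fixed point. -/
def FixedPointSystem {α : Type*} (F : α → α) : Prop :=
  ∀ a, ∃ m, F^[m + 1] a = F^[m] a

/-- A glueing of the Boolean monomial system `M₂` (in variables `y`) to the
Boolean monomial system `M₁` (in variables `x`): the `x`-coordinates are
those of `M₁`, and the `i`-th `y`-coordinate is `g i` multiplied by the
monomial in the `x`-variables given by `T i` (and is `0` when `g i = 0`). -/
def glue {r s : ℕ} (M₁ : Fin r → Option (Finset (Fin r)))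
    (M₂ : Fin s → Option (Finset (Fin s))) (T : Fin s → Finset (Fin r)) :
    (Fin r ⊕ Fin s) → Option (Finset (Fin r ⊕ Fin s))
  | .inl i => (M₁ i).map (Finset.image Sum.inl)
  | .inr i => (M₂ i).map (fun S => S.image Sum.inr ∪ (T i).image Sum.inl)

namespace S14

lemma hasWalk_trans {V : Type*} {E : V → V → Prop} :
    ∀ {p : ℕ} {a b : V}, hasWalk E p a b → ∀ {q : ℕ} {c : V}, hasWalk E q b c →
      hasWalk E (p + q) a c := by
  intro p
  induction p with
  | zero =>
      intro a b h q c hq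
      have hab : a = b := h
      subst hab
      rwa [Nat.zero_add]
  | succ p ih =>
      intro a b h q c hq
      obtain ⟨d, hed, hw⟩ := h
      rw [Nat.add_right_comm]
      exact ⟨d, hed, ih hw hq⟩

lemma hasWalk_snoc {V : Type*} {E : V → V → Prop} {ℓ : ℕ} {a b c : V}
    (h : hasWalk E ℓ a b) (he : E b c) : hasWalk E (ℓ + 1) a c :=
  hasWalk_trans h ⟨c, he, rfl⟩

variable {r s : ℕ}

lemma glue_inl_eval (M₁ : Fin r → Option (Finset (Fin r)))
    (M₂ : Fin s → Option (Finset (Fin s))) (T : Fin s → Finset (Fin r))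
    (z : (Fin r ⊕ Fin s) → ZMod 2) (j : Fin r) :
    sysEval (glue M₁ M₂ T) z (Sum.inl j) = sysEval M₁ (z ∘ Sum.inl) j := by
  unfold sysEval glue
  cases h : M₁ j with
  | none => simp [h, monEval]
  | some S =>
      simp only [h, Option.map_some, monEval]
      rw [Finset.prod_image (fun x _ y _ hxy => Sum.inl_injective hxy)]
      rfl

lemma glue_inr_eval (M₁ : Fin r → Option (Finset (Fin r)))
    (M₂ : Fin s → Option (Finset (Fin s))) (T : Fin s → Finset (Fin r))
    (z : (Fin r ⊕ Fin s) → ZMod 2) (i : Fin s) (S : Finset (Fin s))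
    (hS : M₂ i = some S) :
    sysEval (glue M₁ M₂ T) z (Sum.inr i) =
      (∏ j ∈ S, z (Sum.inr j)) * ∏ k ∈ T i, z (Sum.inl k) := by
  unfold sysEval glue
  simp only [hS, Option.map_some, monEval]
  have hdisj : Disjoint (S.image Sum.inr) ((T i).image Sum.inl) := by
    rw [Finset.disjoint_left]
    intro a ha hb
    obtain ⟨x, -, rfl⟩ := Finset.mem_image.mp ha
    obtain ⟨y, -, h⟩ := Finset.mem_image.mp hb
    exact Sum.inl_ne_inr h
  rw [Finset.prod_union hdisj,
    Finset.prod_image (fun x _ y _ hxy => Sum.inr_injective hxy),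
    Finset.prod_image (fun x _ y _ hxy => Sum.inl_injective hxy)]

lemma xpart (M₁ : Fin r → Option (Finset (Fin r)))
    (M₂ : Fin s → Option (Finset (Fin s))) (T : Fin s → Finset (Fin r))
    (a : (Fin r ⊕ Fin s) → ZMod 2) :
    ∀ t, (sysEval (glue M₁ M₂ T))^[t] a ∘ Sum.inl = (sysEval M₁)^[t] (a ∘ Sum.inl) := by
  intro t
  induction t with
  | zero => rfl
  | succ t ih =>
      rw [Function.iterate_succ_apply', Function.iterate_succ_apply']
      funext j
      rw [Function.comp_apply, glue_inl_eval, ih]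

lemma edge_zero {ι : Type*} (G : ι → Option (Finset ι)) {a c : ι}
    (h : depEdge G a c) {z : ι → ZMod 2} (hz : z c = 0) : sysEval G z a = 0 := by
  obtain ⟨S, hS, hc⟩ := h
  unfold sysEval monEval
  rw [hS]
  exact Finset.prod_eq_zero hc hz

lemma propagate {ι : Type*} (G : ι → Option (Finset ι)) {c : ι}
    {w : ι → ZMod 2} (hc : ∀ u, (sysEval G)^[u] w c = 0) :
    ∀ (ℓ : ℕ) (a : ι), hasWalk (depEdge G) ℓ a c →
      ∀ u, (sysEval G)^[u + ℓ] w a = 0 := by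
  intro ℓ
  induction ℓ with
  | zero =>
      intro a h u
      have hac : a = c := h
      subst hac
      exact hc u
  | succ ℓ ih =>
      intro a h u
      obtain ⟨d, hed, hw⟩ := h
      have : u + (ℓ + 1) = (u + ℓ) + 1 := by omega
      rw [this, Function.iterate_succ_apply']
      exact edge_zero G hed (ih d hw u)

/-- every `Y`-vertex has a nonempty monomial, from `loopNumAt ≥ 1`. -/
lemma hsome_of_loop (M₂ : Fin s → Option (Finset (Fin s)))
    (hloop : ∀ b : Fin s, 1 ≤ loopNumAt (depEdge M₂) b) :
    ∀ i : Fin s, ∃ S, M₂ i = some S ∧ S.Nonempty := by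
  intro i
  have h1 := hloop i
  have hne : {t | 1 ≤ t ∧ ∃ p q, hasWalk (depEdge M₂) p i i ∧
      hasWalk (depEdge M₂) q i i ∧ p = q + t}.Nonempty := by
    by_contra hemp
    rw [Set.not_nonempty_iff_eq_empty] at hemp
    rw [loopNumAt, hemp, Nat.sInf_empty] at h1
    omega
  obtain ⟨t, ht1, p, q, hp, hq, hpq⟩ := hne
  have hp1 : 1 ≤ p := by omega
  cases p with
  | zero => omega
  | succ p =>
      obtain ⟨d, ⟨S, hS, hd⟩, -⟩ := hp
      exact ⟨S, hS, ⟨d, hd⟩⟩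

/-- lift a walk in 𝒴 to a walk in 𝒳 # 𝒴. -/
lemma liftY (M₁ : Fin r → Option (Finset (Fin r)))
    (M₂ : Fin s → Option (Finset (Fin s))) (T : Fin s → Finset (Fin r)) :
    ∀ (ℓ : ℕ) (v w : Fin s), hasWalk (depEdge M₂) ℓ v w →
      hasWalk (depEdge (glue M₁ M₂ T)) ℓ (Sum.inr v) (Sum.inr w) := by
  intro ℓ
  induction ℓ with
  | zero =>
      intro v w h
      have : v = w := h
      subst this; rfl
  | succ ℓ ih =>
      intro v w h
      obtain ⟨d, ⟨S, hS, hd⟩, hwk⟩ := h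
      refine ⟨Sum.inr d, ⟨S.image Sum.inr ∪ (T v).image Sum.inl, ?_, ?_⟩, ih d w hwk⟩
      · show ((M₂ v).map _) = _
        rw [hS]; rfl
      · exact Finset.mem_union_left _ (Finset.mem_image_of_mem _ hd)

/-- If all the `T`-monomials evaluate to 1 along the orbit, the `y`-part of the
glued dynamics is exactly the dynamics of `M₂`. -/
lemma conjY (M₁ : Fin r → Option (Finset (Fin r)))
    (M₂ : Fin s → Option (Finset (Fin s))) (T : Fin s → Finset (Fin r))
    (hsome : ∀ i : Fin s, ∃ S, M₂ i = some S)
    (w : (Fin r ⊕ Fin s) → ZMod 2)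
    (h1 : ∀ t (i : Fin s), ∏ k ∈ T i, (sysEval (glue M₁ M₂ T))^[t] w (Sum.inl k) = 1) :
    ∀ t (i : Fin s),
      (sysEval (glue M₁ M₂ T))^[t] w (Sum.inr i) = (sysEval M₂)^[t] (w ∘ Sum.inr) i := by
  intro t
  induction t with
  | zero => intro i; rfl
  | succ t ih =>
      intro i
      obtain ⟨S, hS⟩ := hsome i
      rw [Function.iterate_succ_apply', Function.iterate_succ_apply',
        glue_inr_eval M₁ M₂ T _ i S hS, h1 t i, mul_one]
      have : sysEval M₂ ((sysEval M₂)^[t] (w ∘ Sum.inr)) i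
          = ∏ j ∈ S, (sysEval M₂)^[t] (w ∘ Sum.inr) j := by
        unfold sysEval monEval; rw [hS]
      rw [this]
      exact Finset.prod_congr rfl (fun j _ => ih j)

end S14

namespace S14
variable {r s : ℕ}

/-- If some `y`-coordinate is `0` at all times, the orbit reaches a fixed point. -/
lemma key1 (M₁ : Fin r → Option (Finset (Fin r)))
    (M₂ : Fin s → Option (Finset (Fin s))) (T : Fin s → Finset (Fin r))
    (hf : FixedPointSystem (sysEval M₁))
    (hsc : StronglyConnected (depEdge M₂))
    (hsome : ∀ i : Fin s, ∃ S, M₂ i = some S ∧ S.Nonempty)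
    (a : (Fin r ⊕ Fin s) → ZMod 2) (c : Fin s)
    (h0 : ∀ u, (sysEval (glue M₁ M₂ T))^[u] a (Sum.inr c) = 0) :
    ∃ m, (sysEval (glue M₁ M₂ T))^[m + 1] a = (sysEval (glue M₁ M₂ T))^[m] a := by
  set F := sysEval (glue M₁ M₂ T) with hFdef
  choose ℓ hℓ using fun v => hsc v c
  have hyzero : ∀ (v : Fin s) (u : ℕ), F^[u + ℓ v] a (Sum.inr v) = 0 := fun v u =>
    propagate _ h0 (ℓ v) _ (liftY M₁ M₂ T (ℓ v) v c (hℓ v)) u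
  obtain ⟨m, hm⟩ := hf (a ∘ Sum.inl)
  set x0 := a ∘ Sum.inl with hx0
  set xs := (sysEval M₁)^[m] x0 with hxs
  have hfix : sysEval M₁ xs = xs :=
    (Function.iterate_succ_apply' (sysEval M₁) m x0).symm.trans hm
  have hstay : ∀ t, (sysEval M₁)^[t + m] x0 = xs := fun t => by
    rw [Function.iterate_add_apply]; exact Function.iterate_fixed hfix t
  set L := m + Finset.univ.sup ℓ with hL
  have hxL : F^[L] a ∘ Sum.inl = xs := by
    rw [hFdef, xpart]
    have : L = Finset.univ.sup ℓ + m := by omega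
    rw [this]; exact hstay _
  have hyL : ∀ v : Fin s, F^[L] a (Sum.inr v) = 0 := by
    intro v
    have hle : ℓ v ≤ L := le_trans (Finset.le_sup (Finset.mem_univ v)) (by omega)
    have : L = (L - ℓ v) + ℓ v := by omega
    rw [this]; exact hyzero v _
  refine ⟨L, ?_⟩
  rw [Function.iterate_succ_apply']
  funext v
  cases v with
  | inl j =>
      show sysEval (glue M₁ M₂ T) (F^[L] a) (Sum.inl j) = _
      rw [glue_inl_eval, hxL, hfix]
      exact (congrFun hxL j).symm
  | inr i =>
      obtain ⟨S, hS, d, hd⟩ := hsome i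
      show sysEval (glue M₁ M₂ T) (F^[L] a) (Sum.inr i) = _
      rw [glue_inr_eval M₁ M₂ T _ i S hS, hyL i,
        Finset.prod_eq_zero hd (hyL d), zero_mul]

end S14

/-- Let `f` be a Boolean monomial fixed point system and `g` a
Boolean monomial system whose dependency graph 𝒴 is strongly connected with
loop number `≥ 1`. A glueing `f # g` is a fixed point system iff either some
vertex of 𝒴 has a walk in 𝒳 # 𝒴 to a zero of 𝒳, or `g` is a fixed point
system. -/
theorem statement14 {r s : ℕ} (hr : 1 ≤ r) (hs : 1 ≤ s)
    (M₁ : Fin r → Option (Finset (Fin r))) (M₂ : Fin s → Option (Finset (Fin s)))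
    (T : Fin s → Finset (Fin r))
    (hf : FixedPointSystem (sysEval M₁))
    (hsc : StronglyConnected (depEdge M₂))
    (hloop : ∀ b : Fin s, 1 ≤ loopNumAt (depEdge M₂) b) :
    FixedPointSystem (sysEval (glue M₁ M₂ T)) ↔
      ((∃ (b : Fin s) (j : Fin r) (ℓ : ℕ), M₁ j = none ∧
          hasWalk (depEdge (glue M₁ M₂ T)) ℓ (Sum.inr b) (Sum.inl j)) ∨
        FixedPointSystem (sysEval M₂)) := by
  have hsome := S14.hsome_of_loop M₂ hloop
  set F := sysEval (glue M₁ M₂ T) with hFdef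
  constructor
  · intro hF
    by_cases hL : ∃ (b : Fin s) (j : Fin r) (ℓ : ℕ), M₁ j = none ∧
        hasWalk (depEdge (glue M₁ M₂ T)) ℓ (Sum.inr b) (Sum.inl j)
    · exact Or.inl hL
    · right
      push_neg at hL
      intro y0
      set a : (Fin r ⊕ Fin s) → ZMod 2 := Sum.elim (fun _ => 1) y0 with ha
      have hone : ∀ t (j : Fin r),
          (∃ (b : Fin s) (ℓ : ℕ), hasWalk (depEdge (glue M₁ M₂ T)) ℓ (Sum.inr b) (Sum.inl j)) →
          F^[t] a (Sum.inl j) = 1 := by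
        intro t
        induction t with
        | zero => intro j _; rfl
        | succ t ih =>
            intro j hj
            obtain ⟨b, ℓ, hw⟩ := hj
            cases hM : M₁ j with
            | none => exact absurd hw (hL b j ℓ hM)
            | some S =>
                rw [Function.iterate_succ_apply', hFdef, S14.glue_inl_eval]
                have hgv : sysEval M₁ (F^[t] a ∘ Sum.inl) j
                    = ∏ k ∈ S, F^[t] a (Sum.inl k) := by
                  unfold sysEval monEval; rw [hM]; rfl
                rw [hgv]
                refine Finset.prod_eq_one (fun k hk => ih k ?_)
                refine ⟨b, ℓ + 1, S14.hasWalk_snoc hw ⟨S.image Sum.inl, ?_,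
                  Finset.mem_image_of_mem _ hk⟩⟩
                show (M₁ j).map (Finset.image Sum.inl) = _
                rw [hM]; rfl
      have h1 : ∀ t (i : Fin s), ∏ k ∈ T i, F^[t] a (Sum.inl k) = 1 := by
        intro t i
        refine Finset.prod_eq_one (fun k hk => hone t k ?_)
        obtain ⟨S, hS, -⟩ := hsome i
        refine ⟨i, 1, ⟨Sum.inl k, ⟨S.image Sum.inr ∪ (T i).image Sum.inl, ?_,
          Finset.mem_union_right _ (Finset.mem_image_of_mem _ hk)⟩, rfl⟩⟩
        show (M₂ i).map _ = _
        rw [hS]; rfl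
      have hconj := S14.conjY M₁ M₂ T (fun i => (hsome i).imp (fun S h => h.1)) a h1
      obtain ⟨m, hm⟩ := hF a
      refine ⟨m, ?_⟩
      funext i
      calc (sysEval M₂)^[m + 1] y0 i = F^[m + 1] a (Sum.inr i) := (hconj (m + 1) i).symm
        _ = F^[m] a (Sum.inr i) := by rw [hm]
        _ = (sysEval M₂)^[m] y0 i := hconj m i
  · intro h a
    rcases h with ⟨b, j, ℓ, hj, hw⟩ | hg
    · have hzero : ∀ u, F^[u] (F a) (Sum.inl j) = 0 := by
        intro u
        rw [← Function.iterate_succ_apply, Function.iterate_succ_apply', hFdef,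
          S14.glue_inl_eval]
        show monEval (M₁ j) _ = 0
        rw [hj]; rfl
      have hb : ∀ u, F^[u + ℓ] (F a) (Sum.inr b) = 0 :=
        S14.propagate _ hzero ℓ _ hw
      have h0 : ∀ u, F^[u] (F^[ℓ + 1] a) (Sum.inr b) = 0 := by
        intro u
        rw [Function.iterate_succ_apply, ← Function.iterate_add_apply]
        exact hb u
      obtain ⟨m, hm⟩ := S14.key1 M₁ M₂ T hf hsc hsome (F^[ℓ + 1] a) b h0
      refine ⟨m + (ℓ + 1), ?_⟩
      have he : m + (ℓ + 1) + 1 = (m + 1) + (ℓ + 1) := by omega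
      rw [he, Function.iterate_add_apply F (m + 1) (ℓ + 1) a,
        Function.iterate_add_apply F m (ℓ + 1) a]
      exact hm
    · obtain ⟨m, hm⟩ := hf (a ∘ Sum.inl)
      set x0 := a ∘ Sum.inl with hx0
      set xs := (sysEval M₁)^[m] x0 with hxs
      have hfix : sysEval M₁ xs = xs :=
        (Function.iterate_succ_apply' (sysEval M₁) m x0).symm.trans hm
      have hstay : ∀ t, (sysEval M₁)^[t + m] x0 = xs := fun t => by
        rw [Function.iterate_add_apply]; exact Function.iterate_fixed hfix t
      by_cases hall : ∀ i : Fin s, ∏ k ∈ T i, xs k = 1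
      · set w := F^[m] a with hwdef
        have hxw : ∀ t, F^[t] w ∘ Sum.inl = xs := by
          intro t
          rw [hwdef, ← Function.iterate_add_apply, hFdef, S14.xpart]
          exact hstay t
        have h1 : ∀ t (i : Fin s), ∏ k ∈ T i, F^[t] w (Sum.inl k) = 1 := by
          intro t i
          calc ∏ k ∈ T i, F^[t] w (Sum.inl k) = ∏ k ∈ T i, xs k :=
                Finset.prod_congr rfl (fun k _ => congrFun (hxw t) k)
            _ = 1 := hall i
        have hconj := S14.conjY M₁ M₂ T (fun i => (hsome i).imp (fun S h => h.1)) w h1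
        rw [← hFdef] at hconj
        obtain ⟨m', hm'⟩ := hg (w ∘ Sum.inr)
        refine ⟨m' + m, ?_⟩
        have he : m' + m + 1 = (m' + 1) + m := by omega
        rw [he, Function.iterate_add_apply F (m' + 1) m a,
          Function.iterate_add_apply F m' m a, ← hwdef]
        funext v
        cases v with
        | inl k =>
            have e1 := congrFun (hxw (m' + 1)) k
            have e2 := congrFun (hxw m') k
            exact e1.trans e2.symm
        | inr i => rw [hconj (m' + 1) i, hconj m' i, hm']
      · push_neg at hall
        obtain ⟨i0, hi0⟩ := hall
        have hz : ∏ k ∈ T i0, xs k = 0 := by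
          rcases (show ∀ z : ZMod 2, z = 0 ∨ z = 1 by decide) (∏ k ∈ T i0, xs k) with h | h
          · exact h
          · exact absurd h hi0
        obtain ⟨k0, hk0, hk0z⟩ := Finset.prod_eq_zero_iff.mp hz
        have h0 : ∀ u, F^[u] (F^[m + 1] a) (Sum.inr i0) = 0 := by
          intro u
          rw [← Function.iterate_add_apply]
          have he : u + (m + 1) = (u + m) + 1 := by omega
          rw [he, Function.iterate_succ_apply']
          obtain ⟨S, hS, -⟩ := hsome i0
          rw [hFdef, S14.glue_inr_eval M₁ M₂ T _ i0 S hS]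
          have hx : F^[u + m] a (Sum.inl k0) = 0 := by
            have e := congrFun (S14.xpart M₁ M₂ T a (u + m)) k0
            rw [Function.comp_apply] at e
            rw [← hFdef, ← hx0] at e
            rw [e, hstay u]
            exact hk0z
          rw [Finset.prod_eq_zero hk0 hx, mul_zero]
        obtain ⟨m', hm'⟩ := S14.key1 M₁ M₂ T hf hsc hsome (F^[m + 1] a) i0 h0
        refine ⟨m' + (m + 1), ?_⟩
        have he : m' + (m + 1) + 1 = (m' + 1) + (m + 1) := by omega
        rw [he, Function.iterate_add_apply F (m' + 1) (m + 1) a,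
          Function.iterate_add_apply F m' (m + 1) a]
        exact hm'
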